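/- arXiv:0911.2057 — 2 statements merged into one kernel-verified Lean document; each statement's English description precedes it below -/
import Mathlib

section
/- The coaction ρ : MSym → MSym ⊗ YSym defined on the fundamental basis by ρ(F_b) = Σ over splittings b → (b_0, b_1) of F_{b_0} ⊗ F_{φ(b_1)} is coassociative and counital, making MSym a right YSym-comodule; moreover ρ ∘ β̄ = (β̄ ⊗ τ̄) ∘ Δ as maps SSym → MSym ⊗ YSym. -/
/-- Planar binary trees. -/
inductive PBTree : Type
  | leaf : PBTree
  | node : PBTree → PBTree → PBTree
  deriving DecidableEq, Repr

namespace PBTree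

instance : Inhabited PBTree := ⟨leaf⟩

/-- Number of internal nodes. -/
def size : PBTree → ℕ
  | leaf => 0
  | node l r => l.size + r.size + 1

/-- Number of leaves. -/
def nleaves : PBTree → ℕ
  | leaf => 1
  | node l r => l.nleaves + r.nleaves

end PBTree

/-- Planar binary trees with `Bool`-labelled internal nodes; a label `true` means the
node belongs to the distinguished upper order ideal.  Bi-leveled trees are the labelled
trees satisfying `isBL` below. -/
inductive LTree : Type
  | leaf : LTree
  | node : LTree → Bool → LTree → LTree
  deriving DecidableEq, Repr

namespace LTree

instance : Inhabited LTree := ⟨leaf⟩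

def size : LTree → ℕ
  | leaf => 0
  | node l _ r => l.size + r.size + 1

def nleaves : LTree → ℕ
  | leaf => 1
  | node l _ r => l.nleaves + r.nleaves

/-- Forget the labels. -/
def forget : LTree → PBTree
  | leaf => PBTree.leaf
  | node l _ r => PBTree.node l.forget r.forget

/-- All labels are `false`. -/
def allFalse : LTree → Bool
  | leaf => true
  | node l b r => !b && l.allFalse && r.allFalse

/-- The set of `true` nodes forms an upper order ideal of the node poset
(each node is below its parent; the root is maximal). -/
def isUpperIdeal : LTree → Bool
  | leaf => true
  | node l b r => if b then l.isUpperIdeal && r.isUpperIdeal else l.allFalse && r.allFalse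

/-- The leftmost node is labelled `true` and is a minimal element of the ideal,
i.e. its descendants are all labelled `false`.  (Vacuously true for the empty tree.) -/
def leftmostMin : LTree → Bool
  | leaf => true
  | node leaf b r => b && r.allFalse
  | node l _ _ => leftmostMin l

/-- `b` is a bi-leveled tree: the `true` nodes form an upper order ideal containing
the leftmost node as a minimal element. -/
def isBL (b : LTree) : Prop := b.isUpperIdeal = true ∧ b.leftmostMin = true

end LTree

/-- The number of bi-leveled trees with `n` (internal) nodes. -/
noncomputable def blCount (n : ℕ) : ℕ :=
  {b : LTree | LTree.isBL b ∧ b.size = n}.ncard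

namespace LTree

/-- In-order (left-to-right) list of the node labels. -/
def labelsList : LTree → List Bool
  | leaf => []
  | node l b r => labelsList l ++ b :: labelsList r

/-- The order ideal of a bi-leveled tree, as the set of (0-indexed, left-to-right)
positions of its `true` nodes. -/
def idealSet (b : LTree) : Finset ℕ :=
  (Finset.range b.size).filter fun i => (labelsList b).getD i false = true

end LTree

namespace PBTree

/-- One step of the Tamari (rotation) order: a child node is moved from the left to the
right branch across its parent. -/
inductive Rot : PBTree → PBTree → Prop
  | here (a b c : PBTree) : Rot (node (node a b) c) (node a (node b c))
  | left {l l' : PBTree} (r : PBTree) : Rot l l' → Rot (node l r) (node l' r)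
  | right (l : PBTree) {r r' : PBTree} : Rot r r' → Rot (node l r) (node l r')

/-- The Tamari order on planar binary trees. -/
def tamariLe : PBTree → PBTree → Prop := Relation.ReflTransGen Rot

end PBTree

/-- The partial order on bi-leveled trees: `b ≤ c` iff the underlying trees satisfy
`φ(b) ≤ φ(c)` in the Tamari order and the ideal of `c` is contained in that of `b`. -/
def blLe (b c : LTree) : Prop :=
  PBTree.tamariLe b.forget c.forget ∧ c.idealSet ⊆ b.idealSet

theorem List.foldr_max_mem : ∀ w : List ℕ, w ≠ [] → w.foldr max 0 ∈ w := by
  intro w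
  induction w with
  | nil => simp
  | cons a t ih =>
    intro _
    by_cases ht : t = []
    · subst ht; simp
    · rcases max_choice a (t.foldr max 0) with h | h <;>
        simp [List.foldr_cons, h, ih ht]

/-- The Loday–Ronco/Tonks map `τ` on words with distinct letters: recursively, the root
is placed at the position of the largest letter. -/
def tauL (w : List ℕ) : PBTree :=
  if h : w = [] then PBTree.leaf
  else
    let j := w.idxOf (w.foldr max 0)
    PBTree.node (tauL (w.take j)) (tauL (w.drop (j + 1)))
termination_by w.length
decreasing_by
  · have hj : w.idxOf (w.foldr max 0) < w.length :=
      List.idxOf_lt_length_iff.2 (List.foldr_max_mem w h)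
    simp only [List.length_take, List.foldr_attach]; omega
  · have : 0 < w.length := List.length_pos_iff.2 h
    simp only [List.length_drop]; omega

/-- The labelled version of `τ`: a node is labelled `true` iff its value (the maximum of
its subword) is at least the threshold `c`. -/
def tauB (c : ℕ) (w : List ℕ) : LTree :=
  if h : w = [] then LTree.leaf
  else
    let m := w.foldr max 0
    let j := w.idxOf m
    LTree.node (tauB c (w.take j)) (decide (c ≤ m)) (tauB c (w.drop (j + 1)))
termination_by w.length
decreasing_by
  · have hj : w.idxOf (w.foldr max 0) < w.length :=
      List.idxOf_lt_length_iff.2 (List.foldr_max_mem w h)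
    simp only [List.length_take, List.foldr_attach]; omega
  · have : 0 < w.length := List.length_pos_iff.2 h
    simp only [List.length_drop]; omega

/-- The map `β` on words: `β(w) = (τ(w); T(w))` with `T(w) = {i : w i ≥ w 1}`, encoded by
labelling a node `true` iff its value is at least the first letter of `w`. -/
def betaL (w : List ℕ) : LTree := tauB w.headI w

/-- The word (one-line notation, values in `1..n`) of a permutation of `Fin n`. -/
def permWord {n : ℕ} (w : Equiv.Perm (Fin n)) : List ℕ :=
  List.ofFn fun i => (w i : ℕ) + 1

def tauP {n : ℕ} (w : Equiv.Perm (Fin n)) : PBTree := tauL (permWord w)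

def betaP {n : ℕ} (w : Equiv.Perm (Fin n)) : LTree := betaL (permWord w)

/-- The (value) inversion set of a permutation: pairs `a < b` such that `b` occurs
before `a` in one-line notation. -/
def invSet {n : ℕ} (w : Equiv.Perm (Fin n)) : Finset (Fin n × Fin n) :=
  Finset.univ.filter fun p => p.1 < p.2 ∧ w.symm p.2 < w.symm p.1

/-- The left weak order on the symmetric group: containment of inversion sets. -/
def weakLe {n : ℕ} (u v : Equiv.Perm (Fin n)) : Prop := invSet u ⊆ invSet v

open scoped TensorProduct

namespace PBTree

/-- All splittings of a planar binary tree along one leaf. -/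
def psplits : PBTree → Finset (PBTree × PBTree)
  | leaf => {(leaf, leaf)}
  | node l r =>
      ((psplits l).image fun p => (p.1, node p.2 r)) ∪
        ((psplits r).image fun p => (node l p.1, p.2))

/-- All splittings of a planar binary tree along a multiset of `m` leaves, as ordered
forests of `m+1` trees. -/
def msplits : ℕ → PBTree → Finset (List PBTree)
  | 0, t => {[t]}
  | m + 1, t => (psplits t).biUnion fun p => (msplits m p.2).image fun L => p.1 :: L

/-- Graft an ordered forest onto the leaves of a tree. -/
def graft : List PBTree → PBTree → PBTree
  | L, leaf => L.headI
  | L, node l r => node (graft (L.take l.nleaves) l) (graft (L.drop l.nleaves) r)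

end PBTree

namespace LTree

/-- All splittings of a labelled tree along one leaf; the pieces keep their labels. -/
def lsplits : LTree → Finset (LTree × LTree)
  | leaf => {(leaf, leaf)}
  | node l b r =>
      ((lsplits l).image fun p => (p.1, node p.2 b r)) ∪
        ((lsplits r).image fun p => (node l b p.1, p.2))

/-- All splittings of a labelled tree along a multiset of `m` leaves. -/
def msplits : ℕ → LTree → Finset (List LTree)
  | 0, t => {[t]}
  | m + 1, t => (lsplits t).biUnion fun p => (msplits m p.2).image fun L => p.1 :: L

/-- Graft an ordered forest of labelled trees onto the leaves of a labelled tree,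
keeping all labels. -/
def graftL : List LTree → LTree → LTree
  | L, leaf => L.headI
  | L, node l b r => node (graftL (L.take l.nleaves) l) b (graftL (L.drop l.nleaves) r)

/-- Set all labels to `false`. -/
def setFalse : LTree → LTree
  | leaf => leaf
  | node l _ r => node l.setFalse false r.setFalse

/-- Set all labels to `true`. -/
def setTrue : LTree → LTree
  | leaf => leaf
  | node l _ r => node l.setTrue true r.setTrue

end LTree

/-- Label all nodes of a planar tree `true`. -/
def PBTree.trueLab : PBTree → LTree
  | leaf => LTree.leaf
  | node l r => LTree.node l.trueLab true r.trueLab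

/-- Label all nodes of a planar tree `false`. -/
def PBTree.falseLab : PBTree → LTree
  | leaf => LTree.leaf
  | node l r => LTree.node l.falseLab false r.falseLab

/-- Grafting of bi-leveled trees for the product of `MSym`:
`(b_0,…,b_m)/c` carries the order ideal `T(c)` if `b_0` is empty, and
`T(b) ∪ {nodes of c}` otherwise. -/
def mgraft (L : List LTree) (c : LTree) : LTree :=
  if L.headI = LTree.leaf then LTree.graftL (L.map LTree.setFalse) c
  else LTree.graftL L c.setTrue

/-- The underlying vector space of `MSym`: the free `ℚ`-vector space on labelled trees
(`MSym` proper is spanned by the bi-leveled trees, i.e. those satisfying `isBL`). -/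
abbrev MSym : Type := LTree →₀ ℚ

/-- The underlying vector space of the Loday–Ronco Hopf algebra `YSym`. -/
abbrev YSym : Type := PBTree →₀ ℚ

/-- The underlying vector space of the Malvenuto–Reutenauer Hopf algebra `SSym`
(`SSym` proper is spanned by the permutation words). -/
abbrev SSym : Type := List ℕ →₀ ℚ

/-- `w` is (the one-line notation of) a permutation of `{1,…,n}`. -/
def IsPermList (w : List ℕ) : Prop := w.Perm (List.range' 1 w.length)

/-- Standardization of a word with distinct letters. -/
def stdL (w : List ℕ) : List ℕ := w.map fun a => (w.filter (· < a)).length + 1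

/-- All shuffles of two words. -/
def shuffles : List ℕ → List ℕ → List (List ℕ)
  | [], v => [v]
  | u, [] => [u]
  | a :: u, b :: v =>
      ((shuffles u (b :: v)).map (a :: ·)) ++ ((shuffles (a :: u) v).map (b :: ·))
termination_by u v => u.length + v.length

/-- The product of the Malvenuto–Reutenauer algebra `SSym` in the fundamental basis:
`F_u · F_v` is the sum of `F_w` over shuffles `w` of `u` with the shifted word of `v`. -/
noncomputable def mulS : SSym →ₗ[ℚ] SSym →ₗ[ℚ] SSym :=
  Finsupp.lift (SSym →ₗ[ℚ] SSym) ℚ (List ℕ) fun u =>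
    Finsupp.lift SSym ℚ (List ℕ) fun v =>
      ((shuffles u (v.map (· + u.length))).map fun w => Finsupp.single w (1 : ℚ)).sum

/-- The product of `MSym` in the fundamental basis:
`F_b · F_c = ∑_{b → (b_0,…,b_m)} F_{(b_0,…,b_m)/c}` where `m` is the number of nodes
of `c`. -/
noncomputable def mulM : MSym →ₗ[ℚ] MSym →ₗ[ℚ] MSym :=
  Finsupp.lift (MSym →ₗ[ℚ] MSym) ℚ LTree fun b =>
    Finsupp.lift MSym ℚ LTree fun c =>
      ∑ L ∈ LTree.msplits c.size b, Finsupp.single (mgraft L c) (1 : ℚ)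

/-- The product of the Loday–Ronco algebra `YSym` in the fundamental basis. -/
noncomputable def mulY : YSym →ₗ[ℚ] YSym →ₗ[ℚ] YSym :=
  Finsupp.lift (YSym →ₗ[ℚ] YSym) ℚ PBTree fun t =>
    Finsupp.lift YSym ℚ PBTree fun s =>
      ∑ L ∈ PBTree.msplits s.size t, Finsupp.single (PBTree.graft L s) (1 : ℚ)

/-- The map `β̄ : SSym → MSym`, `F_w ↦ F_{β(w)}`. -/
noncomputable def betaBar : SSym →ₗ[ℚ] MSym := Finsupp.lmapDomain ℚ ℚ betaL

/-- The map `τ̄ : SSym → YSym`, `F_w ↦ F_{τ(w)}`. -/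
noncomputable def tauBar : SSym →ₗ[ℚ] YSym := Finsupp.lmapDomain ℚ ℚ tauL

/-- The map `φ̄ : MSym → YSym`, `F_b ↦ F_{φ(b)}`. -/
noncomputable def phiBar : MSym →ₗ[ℚ] YSym := Finsupp.lmapDomain ℚ ℚ LTree.forget

/-- The coproduct of `SSym`: `Δ F_w = ∑_{w → (w_0,w_1)} F_{w_0} ⊗ F_{w_1}`, the pieces
of a splitting being standardized to genuine permutations. -/
noncomputable def deltaS : SSym →ₗ[ℚ] SSym ⊗[ℚ] SSym :=
  Finsupp.lift (SSym ⊗[ℚ] SSym) ℚ (List ℕ) fun w =>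
    ∑ i ∈ Finset.range (w.length + 1),
      Finsupp.single (stdL (w.take i)) (1 : ℚ) ⊗ₜ[ℚ] Finsupp.single (stdL (w.drop i)) (1 : ℚ)

/-- The coproduct of `YSym`: `Δ F_t = ∑_{t → (t_0,t_1)} F_{t_0} ⊗ F_{t_1}`. -/
noncomputable def deltaY : YSym →ₗ[ℚ] YSym ⊗[ℚ] YSym :=
  Finsupp.lift (YSym ⊗[ℚ] YSym) ℚ PBTree fun t =>
    ∑ p ∈ PBTree.psplits t, Finsupp.single p.1 (1 : ℚ) ⊗ₜ[ℚ] Finsupp.single p.2 (1 : ℚ)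

/-- The counit of `YSym`. -/
noncomputable def epsY : YSym →ₗ[ℚ] ℚ :=
  Finsupp.lift ℚ ℚ PBTree fun t => if t = PBTree.leaf then (1 : ℚ) else 0

/-- The coaction `ρ : MSym → MSym ⊗ YSym`,
`ρ(F_b) = ∑_{b → (b_0,b_1)} F_{b_0} ⊗ F_{φ(b_1)}`. -/
noncomputable def rhoM : MSym →ₗ[ℚ] MSym ⊗[ℚ] YSym :=
  Finsupp.lift (MSym ⊗[ℚ] YSym) ℚ LTree fun b =>
    ∑ p ∈ LTree.lsplits b, Finsupp.single p.1 (1 : ℚ) ⊗ₜ[ℚ] Finsupp.single p.2.forget (1 : ℚ)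

set_option maxHeartbeats 1600000
set_option synthInstance.maxHeartbeats 1000000

section AuxSplit

namespace PBTree

theorem nleaves_pos : ∀ t : PBTree, 0 < t.nleaves
  | leaf => Nat.one_pos
  | node l r => by have := nleaves_pos l; simp [nleaves]; omega

/-- Split a planar tree at leaf `i` (0-indexed). -/
def splitP : PBTree → ℕ → PBTree × PBTree
  | leaf, _ => (leaf, leaf)
  | node l r, i =>
      if i < l.nleaves then ((splitP l i).1, node (splitP l i).2 r)
      else (node l (splitP r (i - l.nleaves)).1, (splitP r (i - l.nleaves)).2)

theorem splitP_fst_nleaves : ∀ t i, i < t.nleaves → (splitP t i).1.nleaves = i + 1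
  | leaf, i, h => by
      simp [nleaves] at h; subst h; simp [splitP, nleaves]
  | node l r, i, h => by
      by_cases hl : i < l.nleaves
      · simp [splitP, hl, splitP_fst_nleaves l i hl]
      · have hr : i - l.nleaves < r.nleaves := by simp [nleaves] at h; omega
        have := splitP_fst_nleaves r _ hr
        simp [splitP, hl, nleaves, this]
        omega

theorem splitP_snd_nleaves : ∀ t i, i < t.nleaves → (splitP t i).2.nleaves = t.nleaves - i
  | leaf, i, h => by
      simp [nleaves] at h; subst h; simp [splitP, nleaves]
  | node l r, i, h => by
      by_cases hl : i < l.nleaves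
      · have := splitP_snd_nleaves l i hl
        simp [splitP, hl, nleaves, this]; omega
      · have hr : i - l.nleaves < r.nleaves := by simp [nleaves] at h; omega
        have := splitP_snd_nleaves r _ hr
        simp [splitP, hl, nleaves, this]; omega

theorem mem_psplits_iff : ∀ (t : PBTree) (p : PBTree × PBTree),
    p ∈ psplits t ↔ ∃ i < t.nleaves, splitP t i = p
  | leaf, p => by
      constructor
      · intro h; simp [psplits] at h; exact ⟨0, by simp [nleaves], by simp [splitP, h]⟩
      · rintro ⟨i, hi, rfl⟩; simp [psplits, splitP]
  | node l r, p => by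
      simp only [psplits, Finset.mem_union, Finset.mem_image]
      constructor
      · rintro (⟨q, hq, rfl⟩ | ⟨q, hq, rfl⟩)
        · obtain ⟨i, hi, rfl⟩ := (mem_psplits_iff l q).1 hq
          exact ⟨i, by simp [nleaves]; omega, by simp [splitP, hi]⟩
        · obtain ⟨i, hi, rfl⟩ := (mem_psplits_iff r q).1 hq
          refine ⟨l.nleaves + i, by simp [nleaves]; omega, ?_⟩
          simp [splitP, Nat.add_sub_cancel_left]
      · rintro ⟨i, hi, rfl⟩
        by_cases hl : i < l.nleaves
        · exact Or.inl ⟨splitP l i, (mem_psplits_iff l _).2 ⟨i, hl, rfl⟩, by simp [splitP, hl]⟩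
        · have hr : i - l.nleaves < r.nleaves := by simp [nleaves] at hi; omega
          exact Or.inr ⟨splitP r (i - l.nleaves), (mem_psplits_iff r _).2 ⟨_, hr, rfl⟩,
            by simp [splitP, hl]⟩

theorem psplits_eq_image (t : PBTree) :
    psplits t = (Finset.range t.nleaves).image (splitP t) := by
  ext p; simp [mem_psplits_iff, eq_comm]

theorem splitP_injOn (t : PBTree) :
    Set.InjOn (splitP t) (Finset.range t.nleaves) := by
  intro i hi j hj h
  simp only [Finset.coe_range, Set.mem_Iio] at hi hj
  have := splitP_fst_nleaves t i hi
  rw [h, splitP_fst_nleaves t j hj] at this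
  omega

theorem sum_psplits {M : Type*} [AddCommMonoid M] (t : PBTree) (f : PBTree × PBTree → M) :
    ∑ p ∈ psplits t, f p = ∑ i ∈ Finset.range t.nleaves, f (splitP t i) := by
  rw [psplits_eq_image, Finset.sum_image]
  intro i hi j hj h
  exact splitP_injOn t (by simpa using hi) (by simpa using hj) h

end PBTree

namespace LTree

theorem nleaves_pos : ∀ t : LTree, 0 < t.nleaves
  | leaf => Nat.one_pos
  | node l _ r => by have := nleaves_pos l; simp [nleaves]; omega

/-- Split a labelled tree at leaf `i` (0-indexed). -/
def splitL : LTree → ℕ → LTree × LTree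
  | leaf, _ => (leaf, leaf)
  | node l c r, i =>
      if i < l.nleaves then ((splitL l i).1, node (splitL l i).2 c r)
      else (node l c (splitL r (i - l.nleaves)).1, (splitL r (i - l.nleaves)).2)

theorem splitL_fst_nleaves : ∀ t i, i < t.nleaves → (splitL t i).1.nleaves = i + 1
  | leaf, i, h => by
      simp [nleaves] at h; subst h; simp [splitL, nleaves]
  | node l c r, i, h => by
      by_cases hl : i < l.nleaves
      · simp [splitL, hl, splitL_fst_nleaves l i hl]
      · have hr : i - l.nleaves < r.nleaves := by simp [nleaves] at h; omega
        have := splitL_fst_nleaves r _ hr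
        simp [splitL, hl, nleaves, this]
        omega

theorem splitL_snd_nleaves : ∀ t i, i < t.nleaves → (splitL t i).2.nleaves = t.nleaves - i
  | leaf, i, h => by
      simp [nleaves] at h; subst h; simp [splitL, nleaves]
  | node l c r, i, h => by
      by_cases hl : i < l.nleaves
      · have := splitL_snd_nleaves l i hl
        simp [splitL, hl, nleaves, this]; omega
      · have hr : i - l.nleaves < r.nleaves := by simp [nleaves] at h; omega
        have := splitL_snd_nleaves r _ hr
        simp [splitL, hl, nleaves, this]; omega

theorem mem_lsplits_iff : ∀ (t : LTree) (p : LTree × LTree),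
    p ∈ lsplits t ↔ ∃ i < t.nleaves, splitL t i = p
  | leaf, p => by
      constructor
      · intro h; simp [lsplits] at h; exact ⟨0, by simp [nleaves], by simp [splitL, h]⟩
      · rintro ⟨i, hi, rfl⟩; simp [lsplits, splitL]
  | node l c r, p => by
      simp only [lsplits, Finset.mem_union, Finset.mem_image]
      constructor
      · rintro (⟨q, hq, rfl⟩ | ⟨q, hq, rfl⟩)
        · obtain ⟨i, hi, rfl⟩ := (mem_lsplits_iff l q).1 hq
          exact ⟨i, by simp [nleaves]; omega, by simp [splitL, hi]⟩
        · obtain ⟨i, hi, rfl⟩ := (mem_lsplits_iff r q).1 hq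
          refine ⟨l.nleaves + i, by simp [nleaves]; omega, ?_⟩
          simp [splitL, Nat.add_sub_cancel_left]
      · rintro ⟨i, hi, rfl⟩
        by_cases hl : i < l.nleaves
        · exact Or.inl ⟨splitL l i, (mem_lsplits_iff l _).2 ⟨i, hl, rfl⟩, by simp [splitL, hl]⟩
        · have hr : i - l.nleaves < r.nleaves := by simp [nleaves] at hi; omega
          exact Or.inr ⟨splitL r (i - l.nleaves), (mem_lsplits_iff r _).2 ⟨_, hr, rfl⟩,
            by simp [splitL, hl]⟩

theorem lsplits_eq_image (t : LTree) :
    lsplits t = (Finset.range t.nleaves).image (splitL t) := by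
  ext p; simp [mem_lsplits_iff, eq_comm]

theorem splitL_injOn (t : LTree) :
    Set.InjOn (splitL t) (Finset.range t.nleaves) := by
  intro i hi j hj h
  simp only [Finset.coe_range, Set.mem_Iio] at hi hj
  have := splitL_fst_nleaves t i hi
  rw [h, splitL_fst_nleaves t j hj] at this
  omega

theorem sum_lsplits {M : Type*} [AddCommMonoid M] (t : LTree) (f : LTree × LTree → M) :
    ∑ p ∈ lsplits t, f p = ∑ i ∈ Finset.range t.nleaves, f (splitL t i) := by
  rw [lsplits_eq_image, Finset.sum_image]
  intro i hi j hj h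
  exact splitL_injOn t (by simpa using hi) (by simpa using hj) h

theorem forget_nleaves : ∀ t : LTree, t.forget.nleaves = t.nleaves
  | leaf => rfl
  | node l c r => by simp [forget, nleaves, PBTree.nleaves, forget_nleaves l, forget_nleaves r]

theorem forget_eq_leaf_iff : ∀ t : LTree, t.forget = PBTree.leaf ↔ t = leaf
  | leaf => by simp [forget]
  | node l c r => by simp [forget]

theorem splitP_forget : ∀ (t : LTree) (i : ℕ),
    PBTree.splitP t.forget i = ((splitL t i).1.forget, (splitL t i).2.forget)
  | leaf, i => by simp [forget, PBTree.splitP, splitL]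
  | node l c r, i => by
      by_cases hl : i < l.nleaves
      · have hl' : i < l.forget.nleaves := by rwa [forget_nleaves]
        simp [forget, PBTree.splitP, splitL, hl, hl', splitP_forget l i]
      · have hl' : ¬ i < l.forget.nleaves := by rwa [forget_nleaves]
        simp [forget, PBTree.splitP, splitL, hl, hl', splitP_forget r (i - l.nleaves),
          forget_nleaves]

theorem splitL_last : ∀ t : LTree, splitL t (t.nleaves - 1) = (t, leaf)
  | leaf => by simp [splitL]
  | node l c r => by
      have hr := nleaves_pos r
      have hl := nleaves_pos l
      have h : ¬ (nleaves l + nleaves r - 1 < l.nleaves) := by omega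
      have : nleaves l + nleaves r - 1 - l.nleaves = r.nleaves - 1 := by omega
      simp [splitL, nleaves, h, this, splitL_last r]

/-- Double-splitting identities. -/
theorem split_split : ∀ (b : LTree) (i j : ℕ), j ≤ i → i < b.nleaves →
    splitL (splitL b i).1 j = ((splitL b j).1, (splitL (splitL b j).2 (i - j)).1) ∧
    (splitL (splitL b j).2 (i - j)).2 = (splitL b i).2
  | leaf, i, j, hji, hi => by
      simp [nleaves] at hi; subst hi
      simp at hji; subst hji
      simp [splitL]
  | node l c r, i, j, hji, hi => by
      simp only [nleaves] at hi
      by_cases hil : i < l.nleaves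
      · -- both cuts in the left subtree
        have hjl : j < l.nleaves := lt_of_le_of_lt hji hil
        obtain ⟨ih1, ih2⟩ := split_split l i j hji hil
        have h2 : i - j < (splitL l j).2.nleaves := by
          rw [splitL_snd_nleaves l j hjl]; omega
        have hlt : i - j < (node (splitL l j).2 c r).nleaves := by
          simp [nleaves]; omega
        constructor
        · simp only [splitL, if_pos hil, if_pos hjl, ih1]
          have : i - j < (splitL l j).2.nleaves := h2
          simp [splitL, this]
        · simp only [splitL, if_pos hil, if_pos hjl]
          simp [splitL, h2, ih2]
      · by_cases hjl : j < l.nleaves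
        · -- j in left, i in right
          have hir : i - l.nleaves < r.nleaves := by omega
          have hnj : ¬ (i - j < (splitL l j).2.nleaves) := by
            rw [splitL_snd_nleaves l j hjl]; omega
          have harith : i - j - (splitL l j).2.nleaves = i - l.nleaves := by
            rw [splitL_snd_nleaves l j hjl]; omega
          constructor
          · simp only [splitL, if_neg hil, if_pos hjl]
            simp [splitL, hjl, hnj, harith]
          · simp only [splitL, if_neg hil, if_pos hjl]
            simp [splitL, hnj, harith]
        · -- both in right subtree
          have hir : i - l.nleaves < r.nleaves := by omega
          obtain ⟨ih1, ih2⟩ := split_split r (i - l.nleaves) (j - l.nleaves)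
            (by omega) hir
          have hfst : (splitL r (i - l.nleaves)).1.nleaves = i - l.nleaves + 1 :=
            splitL_fst_nleaves r _ hir
          have hnj : ¬ (j < l.nleaves) := hjl
          have harith : i - l.nleaves - (j - l.nleaves) = i - j := by omega
          constructor
          · simp only [splitL, if_neg hil, if_neg hjl]
            have hj' : ¬ (j < l.nleaves) := hjl
            have : j - l.nleaves < (splitL r (i - l.nleaves)).1.nleaves := by
              rw [hfst]; omega
            simp [splitL, hjl, ih1, harith, this]
          · simp only [splitL, if_neg hil, if_neg hjl]
            rw [← harith]; exact ih2

end LTree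

end AuxSplit
section AuxComodule



open scoped TensorProduct

theorem rhoM_single (b : LTree) : rhoM (Finsupp.single b (1 : ℚ)) =
    ∑ i ∈ Finset.range b.nleaves,
      Finsupp.single (LTree.splitL b i).1 (1 : ℚ) ⊗ₜ[ℚ]
        Finsupp.single ((LTree.splitL b i).2).forget (1 : ℚ) := by
  rw [rhoM, Finsupp.lift_apply, Finsupp.sum_single_index (by simp), one_smul,
    LTree.sum_lsplits]

theorem deltaY_single (t : PBTree) : deltaY (Finsupp.single t (1 : ℚ)) =
    ∑ i ∈ Finset.range t.nleaves,
      Finsupp.single (PBTree.splitP t i).1 (1 : ℚ) ⊗ₜ[ℚ]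
        Finsupp.single ((PBTree.splitP t i).2) (1 : ℚ) := by
  rw [deltaY, Finsupp.lift_apply, Finsupp.sum_single_index (by simp), one_smul,
    PBTree.sum_psplits]

theorem epsY_single (t : PBTree) :
    epsY (Finsupp.single t (1 : ℚ)) = if t = PBTree.leaf then (1 : ℚ) else 0 := by
  rw [epsY, Finsupp.lift_apply, Finsupp.sum_single_index (by simp), one_smul]

theorem counit_single (b : LTree) :
    TensorProduct.rid ℚ MSym ((TensorProduct.map LinearMap.id epsY)
      (rhoM (Finsupp.single b (1 : ℚ)))) = Finsupp.single b (1 : ℚ) := by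
  rw [rhoM_single]
  simp only [map_sum]
  have hn := LTree.nleaves_pos b
  rw [Finset.sum_eq_single_of_mem (b.nleaves - 1) (by simp; omega)]
  · rw [LTree.splitL_last]
    simp [TensorProduct.map_tmul, epsY_single, LTree.forget]
  · intro i hi hne
    simp only [Finset.mem_range] at hi
    have h2 : (LTree.splitL b i).2.nleaves = b.nleaves - i := LTree.splitL_snd_nleaves b i hi
    have hner : (LTree.splitL b i).2.forget ≠ PBTree.leaf := by
      intro h
      rw [(LTree.forget_eq_leaf_iff _).1 h] at h2
      simp [LTree.nleaves] at h2
      omega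
    simp [TensorProduct.map_tmul, epsY_single, hner]

theorem triangle_sum {T : Type*} [AddCommMonoid T] (n : ℕ) (g : ℕ → ℕ → T) :
    ∑ i ∈ Finset.range n, ∑ j ∈ Finset.range (i + 1), g i j
      = ∑ j ∈ Finset.range n, ∑ k ∈ Finset.range (n - j), g (j + k) j := by
  rw [Finset.sum_sigma', Finset.sum_sigma']
  refine Finset.sum_nbij' (fun p => ⟨p.2, p.1 - p.2⟩) (fun p => ⟨p.1 + p.2, p.1⟩)
    ?_ ?_ ?_ ?_ ?_
  · rintro ⟨i, j⟩ h
    simp only [Finset.mem_sigma, Finset.mem_range] at h ⊢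
    omega
  · rintro ⟨j, k⟩ h
    simp only [Finset.mem_sigma, Finset.mem_range] at h ⊢
    omega
  · rintro ⟨i, j⟩ h
    simp only [Finset.mem_sigma, Finset.mem_range] at h
    have : j + (i - j) = i := by omega
    simp [this]
  · rintro ⟨j, k⟩ h
    simp only [Finset.mem_sigma, Finset.mem_range] at h
    have : j + k - j = k := by omega
    simp [this]
  · rintro ⟨i, j⟩ h
    simp only [Finset.mem_sigma, Finset.mem_range] at h
    have : j + (i - j) = i := by omega
    rw [this]

set_option maxHeartbeats 1000000 in
theorem coassoc_single (b : LTree) :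
    TensorProduct.assoc ℚ MSym YSym YSym
        ((TensorProduct.map rhoM LinearMap.id) (rhoM (Finsupp.single b (1 : ℚ)))) =
      (TensorProduct.map LinearMap.id deltaY) (rhoM (Finsupp.single b (1 : ℚ))) := by
  rw [rhoM_single]
  simp only [map_sum]
  simp only [TensorProduct.map_tmul, LinearMap.id_coe, id_eq, rhoM_single,
    deltaY_single, TensorProduct.sum_tmul, TensorProduct.tmul_sum, map_sum,
    TensorProduct.assoc_tmul]
  -- LHS : ∑ i < n, ∑ j < (splitL b i).1.nleaves, ...
  -- rewrite inner index bound
  have hL : ∀ i ∈ Finset.range b.nleaves,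
      ∑ j ∈ Finset.range (LTree.splitL b i).1.nleaves,
        Finsupp.single (LTree.splitL (LTree.splitL b i).1 j).1 (1 : ℚ) ⊗ₜ[ℚ]
          (Finsupp.single (LTree.splitL (LTree.splitL b i).1 j).2.forget (1 : ℚ) ⊗ₜ[ℚ]
            Finsupp.single (LTree.splitL b i).2.forget (1 : ℚ))
      = ∑ j ∈ Finset.range (i + 1),
        Finsupp.single (LTree.splitL (LTree.splitL b i).1 j).1 (1 : ℚ) ⊗ₜ[ℚ]
          (Finsupp.single (LTree.splitL (LTree.splitL b i).1 j).2.forget (1 : ℚ) ⊗ₜ[ℚ]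
            Finsupp.single (LTree.splitL b i).2.forget (1 : ℚ)) := by
    intro i hi
    rw [LTree.splitL_fst_nleaves b i (Finset.mem_range.1 hi)]
  rw [Finset.sum_congr rfl hL, triangle_sum]
  refine Finset.sum_congr rfl fun j hj => ?_
  have hjn : j < b.nleaves := Finset.mem_range.1 hj
  have hsnd : (LTree.splitL b j).2.nleaves = b.nleaves - j := LTree.splitL_snd_nleaves b j hjn
  rw [LTree.forget_nleaves, hsnd]
  refine Finset.sum_congr rfl fun k hk => ?_
  have hkn : k < b.nleaves - j := Finset.mem_range.1 hk
  obtain ⟨h1, h2⟩ := LTree.split_split b (j + k) j (by omega) (by omega)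
  rw [LTree.splitP_forget]
  have hk' : j + k - j = k := by omega
  rw [hk'] at h1 h2
  rw [h1, h2]

end AuxComodule
section AuxWords

theorem le_foldr_max' : ∀ (w : List ℕ), ∀ x ∈ w, x ≤ w.foldr max 0 := by
  intro w
  induction w with
  | nil => simp
  | cons a t ih =>
    intro x hx
    rcases List.mem_cons.1 hx with rfl | h
    · simp
    · exact le_trans (ih x h) (by simp)

theorem foldr_max_le {w : List ℕ} {u : ℕ} (h : ∀ x ∈ w, x ≤ u) : w.foldr max 0 ≤ u := by
  induction w with
  | nil => simp
  | cons a t ih =>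
    simp only [List.foldr_cons, max_le_iff]
    exact ⟨h a (by simp), ih fun x hx => h x (by simp [hx])⟩

theorem foldr_max_eq {w : List ℕ} {u : ℕ} (hu : u ∈ w) (h : ∀ x ∈ w, x ≤ u) :
    w.foldr max 0 = u :=
  le_antisymm (foldr_max_le h) (le_foldr_max' w u hu)

theorem nodup_indexOf : ∀ {l : List ℕ}, l.Nodup → ∀ {k : ℕ} (hk : k < l.length),
    l.idxOf l[k] = k := by
  intro l
  induction l with
  | nil => intro _ k hk; simp at hk
  | cons a t ih =>
    intro hl k hk
    rcases List.nodup_cons.1 hl with ⟨ha, ht⟩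
    cases k with
    | zero => simp [List.idxOf_cons]
    | succ k =>
      have hk' : k < t.length := by simpa using hk
      have hmem : t[k] ∈ t := List.getElem_mem hk'
      have hax : (a == (a :: t)[k + 1]) = false := by
        simp only [List.getElem_cons_succ]
        exact beq_eq_false_iff_ne.2 fun h => ha (h ▸ hmem)
      simp only [List.idxOf_cons, hax, cond_false]
      simp only [List.getElem_cons_succ]
      rw [ih ht hk']

theorem headI_mem' {u : List ℕ} (h : u ≠ []) : u.headI ∈ u := by
  cases u with
  | nil => simp at h
  | cons a t => simp

theorem headI_take {w : List ℕ} {i : ℕ} (hi : 1 ≤ i) : (w.take i).headI = w.headI := by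
  cases w with
  | nil => simp
  | cons a t =>
    cases i with
    | zero => omega
    | succ i => simp [List.take]

theorem headI_map {u : List ℕ} (f : ℕ → ℕ) (h : u ≠ []) : (u.map f).headI = f u.headI := by
  cases u with
  | nil => simp at h
  | cons a t => simp

/-- Unfolding `tauB` on a nonempty word. -/
theorem tauB_ne' (c : ℕ) {w : List ℕ} (h : w ≠ []) {m j : ℕ}
    (hm : w.foldr max 0 = m) (hj : w.idxOf m = j) :
    tauB c w = LTree.node (tauB c (w.take j)) (decide (c ≤ m)) (tauB c (w.drop (j + 1))) := by
  subst hm; subst hj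
  rw [tauB]
  simp [h]

theorem tauB_nil (c : ℕ) : tauB c [] = LTree.leaf := by rw [tauB]; simp

theorem tauL_ne' {w : List ℕ} (h : w ≠ []) {m j : ℕ}
    (hm : w.foldr max 0 = m) (hj : w.idxOf m = j) :
    tauL w = PBTree.node (tauL (w.take j)) (tauL (w.drop (j + 1))) := by
  subst hm; subst hj
  rw [tauL]
  simp [h]

theorem tauL_nil : tauL [] = PBTree.leaf := by rw [tauL]; simp

theorem tauB_nleaves (c : ℕ) (w : List ℕ) : (tauB c w).nleaves = w.length + 1 := by
  by_cases h : w = []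
  · subst h; simp [tauB_nil, LTree.nleaves]
  · have hj : w.idxOf (w.foldr max 0) < w.length :=
      List.idxOf_lt_length_iff.2 (List.foldr_max_mem w h)
    rw [tauB_ne' c h rfl rfl]
    have h1 := tauB_nleaves c (w.take (w.idxOf (w.foldr max 0)))
    have h2 := tauB_nleaves c (w.drop (w.idxOf (w.foldr max 0) + 1))
    simp only [LTree.nleaves, h1, h2, List.length_take, List.length_drop]
    omega
termination_by w.length
decreasing_by
  all_goals simp only [List.length_take, List.length_drop]
  · omega
  · omega

theorem tauB_forget (c : ℕ) (w : List ℕ) : (tauB c w).forget = tauL w := by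
  by_cases h : w = []
  · subst h; simp [tauB_nil, tauL_nil, LTree.forget]
  · have hj : w.idxOf (w.foldr max 0) < w.length :=
      List.idxOf_lt_length_iff.2 (List.foldr_max_mem w h)
    rw [tauB_ne' c h rfl rfl, tauL_ne' h rfl rfl]
    have h1 := tauB_forget c (w.take (w.idxOf (w.foldr max 0)))
    have h2 := tauB_forget c (w.drop (w.idxOf (w.foldr max 0) + 1))
    simp [LTree.forget, h1, h2]
termination_by w.length
decreasing_by
  all_goals simp only [List.length_take, List.length_drop]
  · omega
  · omega

end AuxWords
section AuxSplitTau

/-- Splitting the (labelled) Tonks tree of a word with distinct letters at leaf `i`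
gives the Tonks trees of the two halves. -/
theorem splitL_tauB (c : ℕ) (w : List ℕ) (hw : w.Nodup) (i : ℕ) (hi : i ≤ w.length) :
    LTree.splitL (tauB c w) i = (tauB c (w.take i), tauB c (w.drop i)) := by
  by_cases h : w = []
  · subst h
    simp only [List.length_nil, Nat.le_zero] at hi
    subst hi
    simp [tauB_nil, LTree.splitL]
  · have hmem : w.foldr max 0 ∈ w := List.foldr_max_mem w h
    have hj : w.idxOf (w.foldr max 0) < w.length := List.idxOf_lt_length_iff.2 hmem
    set j := w.idxOf (w.foldr max 0) with hjdef
    have hwj : w[j] = w.foldr max 0 := List.getElem_idxOf hj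
    rw [tauB_ne' c h rfl rfl]
    have hnl : (tauB c (w.take j)).nleaves = j + 1 := by
      rw [tauB_nleaves]
      simp only [List.length_take]
      omega
    by_cases hij : i < j + 1
    · have hile : i ≤ j := by omega
      have htnd : (w.take j).Nodup := (List.take_sublist j w).nodup hw
      have hIH := splitL_tauB c (w.take j) htnd i
        (by simp only [List.length_take]; omega)
      simp only [LTree.splitL, ← hjdef, hnl, if_pos hij, hIH]
      simp only [Prod.mk.injEq, ← hjdef]
      constructor
      · rw [List.take_take, min_eq_left hile]
      · -- tauB c (w.drop i) = node (tauB c (drop i (take j w))) _ (tauB c (drop (j+1) w))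
        have hdne : w.drop i ≠ [] := by
          intro hcon
          have := congrArg List.length hcon
          simp only [List.length_drop, List.length_nil] at this
          omega
        have hji : j - i < (w.drop i).length := by
          simp only [List.length_drop]; omega
        have hget : (w.drop i)[j - i] = w.foldr max 0 := by
          rw [List.getElem_drop]
          simp only [show i + (j - i) = j by omega]
          exact hwj
        have hmem' : w.foldr max 0 ∈ w.drop i := hget ▸ List.getElem_mem hji
        have hmax' : (w.drop i).foldr max 0 = w.foldr max 0 :=
          foldr_max_eq hmem' fun x hx => le_foldr_max' w x (List.mem_of_mem_drop hx)
        have hdnd : (w.drop i).Nodup := (List.drop_sublist i w).nodup hw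
        have hidx : (w.drop i).idxOf (w.foldr max 0) = j - i := by
          conv_lhs => rw [← hget]
          exact nodup_indexOf hdnd hji
        rw [tauB_ne' c hdne hmax' hidx]
        congr 2
        · rw [List.take_drop, show i + (j - i) = j by omega, List.drop_take]
        · rw [List.drop_drop, show i + (j - i + 1) = j + 1 by omega]
    · have hjlt : j + 1 ≤ i := by omega
      have hdnd : (w.drop (j + 1)).Nodup := (List.drop_sublist (j + 1) w).nodup hw
      have hIH := splitL_tauB c (w.drop (j + 1)) hdnd (i - (j + 1))
        (by simp only [List.length_drop]; omega)
      simp only [LTree.splitL, ← hjdef, hnl, if_neg hij, hIH]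
      simp only [Prod.mk.injEq, ← hjdef]
      constructor
      · -- tauB c (w.take i) = node (tauB c (take j w)) _ (tauB c (take (i-(j+1)) (drop (j+1) w)))
        have htne : w.take i ≠ [] := by
          intro hcon
          have := congrArg List.length hcon
          simp only [List.length_take, List.length_nil] at this
          omega
        have hjlen : j < (w.take i).length := by
          simp only [List.length_take]; omega
        have hget : (w.take i)[j] = w.foldr max 0 := by
          rw [List.getElem_take, hwj]
        have hmem' : w.foldr max 0 ∈ w.take i := hget ▸ List.getElem_mem hjlen
        have hmax' : (w.take i).foldr max 0 = w.foldr max 0 :=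
          foldr_max_eq hmem' fun x hx => le_foldr_max' w x (List.mem_of_mem_take hx)
        have htnd : (w.take i).Nodup := (List.take_sublist i w).nodup hw
        have hidx : (w.take i).idxOf (w.foldr max 0) = j := by
          conv_lhs => rw [← hget]
          exact nodup_indexOf htnd hjlen
        rw [tauB_ne' c htne hmax' hidx]
        congr 2
        · rw [List.take_take, min_eq_left (by omega : j ≤ i)]
        · rw [List.drop_take]
      · rw [List.drop_drop, show j + 1 + (i - (j + 1)) = i by omega]
termination_by w.length
decreasing_by
  all_goals simp only [List.length_take, List.length_drop]
  · omega
  · omega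

end AuxSplitTau
section AuxStd

/-- `tauB` only depends on the relative order of the (distinct) letters and on the
relative position of the threshold. -/
theorem tauB_congr (f : ℕ → ℕ) (c c' : ℕ) (w : List ℕ) (hw : w.Nodup)
    (hmono : ∀ a ∈ w, ∀ b ∈ w, (a < b ↔ f a < f b))
    (hc : ∀ a ∈ w, (c ≤ a ↔ c' ≤ f a)) :
    tauB c' (w.map f) = tauB c w := by
  by_cases h : w = []
  · subst h; simp [tauB_nil]
  · have hmem : w.foldr max 0 ∈ w := List.foldr_max_mem w h
    have hj : w.idxOf (w.foldr max 0) < w.length := List.idxOf_lt_length_iff.2 hmem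
    have hwj : w[w.idxOf (w.foldr max 0)] = w.foldr max 0 := List.getElem_idxOf hj
    have hne' : w.map f ≠ [] := by simp [h]
    have hmax' : (w.map f).foldr max 0 = f (w.foldr max 0) := by
      refine foldr_max_eq (List.mem_map_of_mem (f := f) hmem) ?_
      rintro y hy
      obtain ⟨x, hx, rfl⟩ := List.mem_map.1 hy
      rcases lt_or_eq_of_le (le_foldr_max' w x hx) with hlt | heq
      · exact le_of_lt ((hmono x hx _ hmem).1 hlt)
      · rw [heq]
    have hndm : (w.map f).Nodup := by
      refine hw.map_on ?_
      intro x hx y hy hxy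
      rcases lt_trichotomy x y with hlt | heq | hgt
      · exact absurd hxy (ne_of_lt ((hmono x hx y hy).1 hlt))
      · exact heq
      · exact absurd hxy.symm (ne_of_lt ((hmono y hy x hx).1 hgt))
    have hjm : w.idxOf (w.foldr max 0) < (w.map f).length := by
      simpa using hj
    have hgetm : (w.map f)[w.idxOf (w.foldr max 0)] = f (w.foldr max 0) := by
      rw [List.getElem_map, hwj]
    have hidx : (w.map f).idxOf (f (w.foldr max 0)) = w.idxOf (w.foldr max 0) := by
      conv_lhs => rw [← hgetm]
      exact nodup_indexOf hndm hjm
    rw [tauB_ne' c' hne' hmax' hidx, tauB_ne' c h rfl rfl]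
    have ht := tauB_congr f c c' (w.take (w.idxOf (w.foldr max 0)))
      ((List.take_sublist _ w).nodup hw)
      (fun a ha b hb => hmono a (List.mem_of_mem_take ha) b (List.mem_of_mem_take hb))
      (fun a ha => hc a (List.mem_of_mem_take ha))
    have hd := tauB_congr f c c' (w.drop (w.idxOf (w.foldr max 0) + 1))
      ((List.drop_sublist _ w).nodup hw)
      (fun a ha b hb => hmono a (List.mem_of_mem_drop ha) b (List.mem_of_mem_drop hb))
      (fun a ha => hc a (List.mem_of_mem_drop ha))
    rw [← List.map_take, ← List.map_drop] at *
    rw [ht, hd]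
    congr 1
    have := hc _ hmem
    by_cases hcm : c ≤ w.foldr max 0
    · simp [hcm, this.1 hcm]
    · have : ¬ c' ≤ f (w.foldr max 0) := fun hh => hcm (this.2 hh)
      simp [hcm, this]
termination_by w.length
decreasing_by
  all_goals simp only [List.length_take, List.length_drop]
  · omega
  · omega

theorem tauL_congr (f : ℕ → ℕ) (w : List ℕ) (hw : w.Nodup)
    (hmono : ∀ a ∈ w, ∀ b ∈ w, (a < b ↔ f a < f b)) :
    tauL (w.map f) = tauL w := by
  rw [← tauB_forget 0 (w.map f), ← tauB_forget 0 w,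
    tauB_congr f 0 0 w hw hmono (by simp)]

/-- The standardization letter map. -/
def stdF (w : List ℕ) (a : ℕ) : ℕ := (w.filter (· < a)).length + 1

theorem stdL_eq_map (w : List ℕ) : stdL w = w.map (stdF w) := rfl

theorem stdF_lt {w : List ℕ} {a b : ℕ} (ha : a ∈ w) (hab : a < b) :
    stdF w a < stdF w b := by
  have hsub : (w.filter (fun x => x < a)).Sublist (w.filter (fun x => x < b)) :=
    List.monotone_filter_right w (by intro x hx; simp at hx ⊢; omega)
  have hlen : (w.filter (fun x => x < a)).length ≤ (w.filter (fun x => x < b)).length :=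
    hsub.length_le
  have hne : (w.filter (fun x => x < a)).length ≠ (w.filter (fun x => x < b)).length := by
    intro he
    have := hsub.eq_of_length he
    have hbmem : a ∈ w.filter (fun x => x < b) := by
      rw [List.mem_filter]; exact ⟨ha, by simpa using hab⟩
    rw [← this, List.mem_filter] at hbmem
    simp at hbmem
  simp only [stdF]
  omega

theorem stdF_mono_iff {w : List ℕ} {a b : ℕ} (ha : a ∈ w) (hb : b ∈ w) :
    a < b ↔ stdF w a < stdF w b := by
  constructor
  · exact fun h => stdF_lt ha h
  · intro h
    rcases lt_trichotomy a b with hlt | heq | hgt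
    · exact hlt
    · subst heq; omega
    · have := stdF_lt hb hgt; omega

theorem stdF_le_iff {w : List ℕ} {a b : ℕ} (ha : a ∈ w) (hb : b ∈ w) :
    a ≤ b ↔ stdF w a ≤ stdF w b := by
  rw [← Nat.not_lt, ← Nat.not_lt, not_iff_not]
  exact stdF_mono_iff hb ha

/-- `β` of a standardized word agrees with the labelled Tonks tree of the original
word, with threshold its first letter. -/
theorem betaL_stdL (u : List ℕ) (hu : u.Nodup) (c : ℕ) (hc : u ≠ [] → u.headI = c) :
    betaL (stdL u) = tauB c u := by
  by_cases h : u = []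
  · subst h; simp [betaL, stdL, tauB_nil]
  · have hcm : u.headI ∈ u := headI_mem' h
    rw [betaL, stdL_eq_map, headI_map _ h, ← hc h]
    exact tauB_congr (stdF u) u.headI (stdF u u.headI) u hu
      (fun a ha b hb => stdF_mono_iff ha hb)
      (fun a ha => stdF_le_iff hcm ha)

theorem tauL_stdL (u : List ℕ) (hu : u.Nodup) : tauL (stdL u) = tauL u := by
  rw [stdL_eq_map]
  exact tauL_congr (stdF u) u hu (fun a ha b hb => stdF_mono_iff ha hb)

end AuxStd
section AuxCompat

theorem betaBar_single (w : List ℕ) :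
    betaBar (Finsupp.single w (1 : ℚ)) = Finsupp.single (betaL w) (1 : ℚ) := by
  simp only [betaBar]
  rw [Finsupp.lmapDomain_apply, Finsupp.mapDomain_single]

theorem tauBar_single (w : List ℕ) :
    tauBar (Finsupp.single w (1 : ℚ)) = Finsupp.single (tauL w) (1 : ℚ) := by
  simp only [tauBar]
  rw [Finsupp.lmapDomain_apply, Finsupp.mapDomain_single]

theorem deltaS_single (w : List ℕ) : deltaS (Finsupp.single w (1 : ℚ)) =
    ∑ i ∈ Finset.range (w.length + 1),
      Finsupp.single (stdL (w.take i)) (1 : ℚ) ⊗ₜ[ℚ] Finsupp.single (stdL (w.drop i)) (1 : ℚ) := by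
  rw [deltaS, Finsupp.lift_apply, Finsupp.sum_single_index (by simp), one_smul]

theorem compat_single (w : List ℕ) (hw : IsPermList w) :
    rhoM (betaBar (Finsupp.single w (1 : ℚ))) =
      TensorProduct.map betaBar tauBar (deltaS (Finsupp.single w (1 : ℚ))) := by
  have hnd : w.Nodup := hw.symm.nodup (List.nodup_range' (s := 1) (n := w.length))
  rw [betaBar_single, rhoM_single, deltaS_single, map_sum]
  have hbn : (betaL w).nleaves = w.length + 1 := tauB_nleaves w.headI w
  rw [hbn]
  refine Finset.sum_congr rfl fun i hi => ?_
  have hi' : i ≤ w.length := by have := Finset.mem_range.1 hi; omega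
  have hsplit : LTree.splitL (betaL w) i
      = (tauB w.headI (w.take i), tauB w.headI (w.drop i)) :=
    splitL_tauB w.headI w hnd i hi'
  rw [hsplit, TensorProduct.map_tmul, betaBar_single, tauBar_single]
  have h1 : betaL (stdL (w.take i)) = tauB w.headI (w.take i) := by
    refine betaL_stdL (w.take i) ((List.take_sublist i w).nodup hnd) w.headI (fun hne => ?_)
    have h1i : 1 ≤ i := by
      by_contra hcon
      have : i = 0 := by omega
      subst this
      simp at hne
    exact headI_take h1i
  have h2 : tauL (stdL (w.drop i)) = tauL (w.drop i) :=
    tauL_stdL (w.drop i) ((List.drop_sublist i w).nodup hnd)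
  rw [h1, h2, tauB_forget]

end AuxCompat
/-- The coaction `ρ(F_b) = ∑_{b → (b_0,b_1)} F_{b_0} ⊗ F_{φ(b_1)}` is
counital and coassociative, making `MSym` a right `YSym`-comodule, and
`ρ ∘ β̄ = (β̄ ⊗ τ̄) ∘ Δ` as maps `SSym → MSym ⊗ YSym`. -/
theorem MSym_comodule :
    -- counit
    (∀ x : MSym,
      TensorProduct.rid ℚ MSym ((TensorProduct.map LinearMap.id epsY) (rhoM x)) = x) ∧
    -- coassociativity
    (∀ x : MSym,
      TensorProduct.assoc ℚ MSym YSym YSym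
          ((TensorProduct.map rhoM LinearMap.id) (rhoM x)) =
        (TensorProduct.map LinearMap.id deltaY) (rhoM x)) ∧
    -- compatibility `ρ ∘ β̄ = (β̄ ⊗ τ̄) ∘ Δ` (on the permutation basis of `SSym`)
    (∀ w : List ℕ, IsPermList w →
      rhoM (betaBar (Finsupp.single w (1 : ℚ))) =
        TensorProduct.map betaBar tauBar (deltaS (Finsupp.single w (1 : ℚ)))) := by
  refine ⟨?_, ?_, fun w hw => compat_single w hw⟩
  · intro x
    induction x using Finsupp.induction_linear with
    | zero => simp only [map_zero]
    | add f g hf hg =>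
      simp only [map_add]
      rw [hf, hg]
    | single a q =>
      have hrw : (Finsupp.single a q : MSym) = q • Finsupp.single a 1 := by
        simp [Finsupp.smul_single]
      rw [hrw]
      simp only [map_smul]
      rw [counit_single]
  · intro x
    induction x using Finsupp.induction_linear with
    | zero => simp
    | add f g hf hg => simp only [map_add, hf, hg]
    | single a q =>
      have hrw : (Finsupp.single a q : MSym) = q • Finsupp.single a 1 := by
        simp [Finsupp.smul_single]
      rw [hrw]
      simp only [map_smul]
      rw [coassoc_single]
end

section
/- Every bi-leveled tree c with at least one node decomposes uniquely as c = b\s where b is an indecomposable bi-leveled tree (its order ideal contains the rightmost node of the underlying tree) and s is a planar binary tree; this gives a bijection of graded sets M_+ ≅ B × Y, where M_+ is the set of nonempty bi-leveled trees, B the set of indecomposable bi-leveled trees, and Y the set of all planar binary trees (including the empty tree). -/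
open scoped TensorProduct

/-- `b\s`: graft the planar tree `s` onto the rightmost leaf of the labelled tree `b`,
keeping the order ideal of `b` (the new nodes are not in the ideal). -/
def graftRight : LTree → PBTree → LTree
  | LTree.leaf, s => s.falseLab
  | LTree.node l b r, s => LTree.node l b (graftRight r s)

/-- The rightmost node of the tree is labelled `true`. -/
def rightmostTrue : LTree → Bool
  | .leaf => false
  | .node _ b .leaf => b
  | .node _ _ r => rightmostTrue r

/-- An indecomposable bi-leveled tree: its order ideal contains the rightmost node. -/
def indecBL (b : LTree) : Prop := b.isBL ∧ rightmostTrue b = true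

/-- `β(Max(t))`: the bi-leveled tree on `t` whose order ideal consists exactly of the
nodes along the leftmost branch of `t`. -/
def maxBL : PBTree → LTree
  | PBTree.leaf => LTree.leaf
  | PBTree.node l r => LTree.node (maxBL l) true r.falseLab

section Aux
open LTree

lemma allFalse_node {l r : LTree} {b : Bool} :
    (LTree.node l b r).allFalse = true ↔ b = false ∧ l.allFalse = true ∧ r.allFalse = true := by
  show (!b && l.allFalse && r.allFalse) = true ↔ _
  simp [and_assoc]

lemma ui_node_true {l r : LTree} :
    (LTree.node l true r).isUpperIdeal = true ↔
      l.isUpperIdeal = true ∧ r.isUpperIdeal = true := by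
  show (if true = true then _ else _) = true ↔ _
  simp

lemma ui_node_false {l r : LTree} :
    (LTree.node l false r).isUpperIdeal = true ↔
      l.allFalse = true ∧ r.allFalse = true := by
  show (if false = true then _ else _) = true ↔ _
  simp

lemma ui_node {l r : LTree} {b : Bool} (h : (LTree.node l b r).isUpperIdeal = true) :
    (b = true ∧ l.isUpperIdeal = true ∧ r.isUpperIdeal = true) ∨
    (b = false ∧ l.allFalse = true ∧ r.allFalse = true) := by
  cases b with
  | true => exact Or.inl ⟨rfl, (ui_node_true.1 h)⟩
  | false => exact Or.inr ⟨rfl, (ui_node_false.1 h)⟩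

lemma lm_node_leaf {r : LTree} {b : Bool} :
    (LTree.node LTree.leaf b r).leftmostMin = true ↔ b = true ∧ r.allFalse = true := by
  show (b && r.allFalse) = true ↔ _
  simp

lemma lm_node_node {a d r : LTree} {c b : Bool} :
    (LTree.node (LTree.node a c d) b r).leftmostMin = (LTree.node a c d).leftmostMin := rfl

lemma rt_node_leaf {l : LTree} {b : Bool} :
    rightmostTrue (LTree.node l b LTree.leaf) = b := rfl

lemma rt_node_node {l rl rr : LTree} {b rb : Bool} :
    rightmostTrue (LTree.node l b (LTree.node rl rb rr)) =
      rightmostTrue (LTree.node rl rb rr) := rfl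

lemma graftRight_node {l r : LTree} {b : Bool} {s : PBTree} :
    graftRight (LTree.node l b r) s = LTree.node l b (graftRight r s) := rfl

lemma falseLab_allFalse (s : PBTree) : s.falseLab.allFalse = true := by
  induction s with
  | leaf => rfl
  | node l r ihl ihr => exact allFalse_node.2 ⟨rfl, ihl, ihr⟩

lemma allFalse_isUpperIdeal : ∀ t : LTree, t.allFalse = true → t.isUpperIdeal = true
  | .leaf, _ => rfl
  | .node l b r, h => by
    obtain ⟨hb, hl, hr⟩ := allFalse_node.1 h
    subst hb
    exact ui_node_false.2 ⟨hl, hr⟩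

lemma falseLab_forget : ∀ t : LTree, t.allFalse = true → t.forget.falseLab = t
  | .leaf, _ => rfl
  | .node l b r, h => by
    obtain ⟨hb, hl, hr⟩ := allFalse_node.1 h
    subst hb
    show LTree.node l.forget.falseLab false r.forget.falseLab = _
    rw [falseLab_forget l hl, falseLab_forget r hr]

lemma forget_falseLab : ∀ s : PBTree, s.falseLab.forget = s
  | .leaf => rfl
  | .node l r => by
    show PBTree.node l.falseLab.forget r.falseLab.forget = _
    rw [forget_falseLab l, forget_falseLab r]

lemma falseLab_size : ∀ s : PBTree, s.falseLab.size = s.size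
  | .leaf => rfl
  | .node l r => by
    show l.falseLab.size + r.falseLab.size + 1 = _
    rw [falseLab_size l, falseLab_size r]; rfl

lemma graftRight_size : ∀ (b : LTree) (s : PBTree),
    (graftRight b s).size = b.size + s.size
  | .leaf, s => by
    show s.falseLab.size = 0 + s.size
    rw [falseLab_size]; omega
  | .node l lb r, s => by
    show l.size + (graftRight r s).size + 1 = l.size + r.size + 1 + s.size
    rw [graftRight_size r s]; omega

lemma allFalse_rightmostTrue : ∀ b : LTree, b.allFalse = true → rightmostTrue b = false
  | .leaf, _ => rfl
  | .node l lb .leaf, h => by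
    rw [rt_node_leaf]
    exact (allFalse_node.1 h).1
  | .node l lb (.node rl rb rr), h => by
    rw [rt_node_node]
    exact allFalse_rightmostTrue _ (allFalse_node.1 h).2.2

lemma graftRight_allFalse : ∀ (b : LTree) (s : PBTree),
    (graftRight b s).allFalse = true → b.allFalse = true
  | .leaf, _, _ => rfl
  | .node l lb r, s, h => by
    rw [graftRight_node] at h
    obtain ⟨hb, hl, hr⟩ := allFalse_node.1 h
    exact allFalse_node.2 ⟨hb, hl, graftRight_allFalse r s hr⟩

lemma graftRight_isUpperIdeal : ∀ (b : LTree) (s : PBTree),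
    rightmostTrue b = true → b.isUpperIdeal = true → (graftRight b s).isUpperIdeal = true
  | .leaf, s, hrt, _ => by simp [rightmostTrue] at hrt
  | .node l lb .leaf, s, hrt, hui => by
    rw [rt_node_leaf] at hrt
    subst hrt
    rw [graftRight_node]
    exact ui_node_true.2 ⟨(ui_node_true.1 hui).1,
      allFalse_isUpperIdeal _ (falseLab_allFalse s)⟩
  | .node l lb (.node rl rb rr), s, hrt, hui => by
    rw [rt_node_node] at hrt
    rw [graftRight_node]
    rcases ui_node hui with ⟨hb, hl, hr⟩ | ⟨hb, hl, hr⟩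
    · subst hb
      exact ui_node_true.2 ⟨hl, graftRight_isUpperIdeal _ s hrt hr⟩
    · rw [allFalse_rightmostTrue _ hr] at hrt
      exact absurd hrt (by simp)

lemma isUpperIdeal_of_graftRight : ∀ (b : LTree) (s : PBTree),
    (graftRight b s).isUpperIdeal = true → b.isUpperIdeal = true
  | .leaf, _, _ => rfl
  | .node l lb r, s, h => by
    rw [graftRight_node] at h
    rcases ui_node h with ⟨hb, hl, hr⟩ | ⟨hb, hl, hr⟩
    · subst hb
      exact ui_node_true.2 ⟨hl, isUpperIdeal_of_graftRight r s hr⟩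
    · subst hb
      exact ui_node_false.2 ⟨hl, graftRight_allFalse r s hr⟩

lemma graftRight_leftmostMin : ∀ (b : LTree) (s : PBTree),
    rightmostTrue b = true → b.leftmostMin = true → (graftRight b s).leftmostMin = true
  | .leaf, s, hrt, _ => by simp [rightmostTrue] at hrt
  | .node .leaf lb r, s, hrt, hlm => by
    obtain ⟨hb, hall⟩ := lm_node_leaf.1 hlm
    subst hb
    cases r with
    | leaf =>
      rw [graftRight_node]
      exact lm_node_leaf.2 ⟨rfl, falseLab_allFalse s⟩
    | node rl rb rr =>
      rw [rt_node_node, allFalse_rightmostTrue _ hall] at hrt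
      exact absurd hrt (by simp)
  | .node (.node a c d) lb r, s, hrt, hlm => by
    rw [graftRight_node, lm_node_node]
    rwa [lm_node_node] at hlm

lemma leftmostMin_of_graftRight : ∀ (b : LTree) (s : PBTree),
    (graftRight b s).leftmostMin = true → b.leftmostMin = true
  | .leaf, _, _ => rfl
  | .node .leaf lb r, s, h => by
    rw [graftRight_node] at h
    obtain ⟨hb, hall⟩ := lm_node_leaf.1 h
    exact lm_node_leaf.2 ⟨hb, graftRight_allFalse r s hall⟩
  | .node (.node a c d) lb r, s, h => by
    rw [graftRight_node, lm_node_node] at h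
    rwa [lm_node_node]

lemma allFalse_not_leftmostMin : ∀ c : LTree, c ≠ LTree.leaf → c.allFalse = true →
    c.leftmostMin = false
  | .leaf, hne, _ => absurd rfl hne
  | .node .leaf lb r, _, h => by
    show (lb && r.allFalse) = false
    rw [(allFalse_node.1 h).1]
    rfl
  | .node (.node a c d) lb r, _, h => by
    rw [lm_node_node]
    exact allFalse_not_leftmostMin _ (by simp) (allFalse_node.1 h).2.1

lemma graftRight_inj : ∀ (b b' : LTree) (s s' : PBTree),
    rightmostTrue b = true → rightmostTrue b' = true →
    graftRight b s = graftRight b' s' → b = b' ∧ s = s'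
  | .leaf, _, _, _, hrt, _, _ => by simp [rightmostTrue] at hrt
  | .node _ _ _, .leaf, _, _, _, hrt', _ => by simp [rightmostTrue] at hrt'
  | .node l lb r, .node l' lb' r', s, s', hrt, hrt', heq => by
    rw [graftRight_node, graftRight_node] at heq
    obtain ⟨hl, hlb, hg⟩ := LTree.node.injEq .. ▸ heq
    cases r with
    | leaf =>
      cases r' with
      | leaf =>
        have : s = s' := by
          rw [← forget_falseLab s, ← forget_falseLab s']
          exact congrArg LTree.forget hg
        exact ⟨by rw [hl, hlb], this⟩
      | node rl' rb' rr' =>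
        rw [rt_node_node] at hrt'
        have h1 : (graftRight (LTree.node rl' rb' rr') s').allFalse = true := by
          rw [← hg]; exact falseLab_allFalse s
        have := allFalse_rightmostTrue _ (graftRight_allFalse _ _ h1)
        rw [hrt'] at this; exact absurd this (by simp)
    | node rl rb rr =>
      cases r' with
      | leaf =>
        rw [rt_node_node] at hrt
        have h1 : (graftRight (LTree.node rl rb rr) s).allFalse = true := by
          rw [hg]; exact falseLab_allFalse s'
        have := allFalse_rightmostTrue _ (graftRight_allFalse _ _ h1)
        rw [hrt] at this; exact absurd this (by simp)
      | node rl' rb' rr' =>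
        rw [rt_node_node] at hrt hrt'
        obtain ⟨h1, h2⟩ := graftRight_inj _ _ _ _ hrt hrt' hg
        exact ⟨by rw [hl, hlb, h1], h2⟩

lemma exists_decomp : ∀ c : LTree, c.isUpperIdeal = true →
    ∃ b s, graftRight b s = c ∧
      (rightmostTrue b = true ∨ (b = LTree.leaf ∧ c.allFalse = true))
  | .leaf, _ => ⟨.leaf, .leaf, rfl, Or.inr ⟨rfl, rfl⟩⟩
  | .node l lb r, hui => by
    have hr : r.isUpperIdeal = true := by
      rcases ui_node hui with ⟨_, _, h⟩ | ⟨_, _, h⟩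
      · exact h
      · exact allFalse_isUpperIdeal _ h
    obtain ⟨b', s', hg, hcase⟩ := exists_decomp r hr
    rcases hcase with hrt | ⟨hbleaf, hall⟩
    · refine ⟨.node l lb b', s', by rw [graftRight_node, hg], Or.inl ?_⟩
      cases b' with
      | leaf => simp [rightmostTrue] at hrt
      | node a c d => rwa [rt_node_node]
    · cases lb with
      | true =>
        refine ⟨.node l true .leaf, r.forget, ?_, Or.inl rt_node_leaf⟩
        rw [graftRight_node]
        show LTree.node l true r.forget.falseLab = _
        rw [falseLab_forget r hall]
      | false =>
        have hlf : l.allFalse = true := (ui_node_false.1 hui).1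
        have hcall : (LTree.node l false r).allFalse = true :=
          allFalse_node.2 ⟨rfl, hlf, hall⟩
        exact ⟨.leaf, (LTree.node l false r).forget,
          falseLab_forget _ hcall, Or.inr ⟨rfl, hcall⟩⟩

end Aux

/-- Every nonempty bi-leveled tree `c` decomposes uniquely as
`c = b\s` with `b` an indecomposable bi-leveled tree and `s` a planar binary tree;
conversely each such `b\s` is a nonempty bi-leveled tree, and the bijection
`M₊ ≅ B × Y` is graded: `|c| = |b| + |s|`. -/
theorem unique_indecomposable_decomposition :
    (∀ (b : LTree) (s : PBTree), indecBL b →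
      (graftRight b s).isBL ∧ graftRight b s ≠ LTree.leaf ∧
        (graftRight b s).size = b.size + s.size) ∧
    (∀ c : LTree, c.isBL → c ≠ LTree.leaf →
      ∃! p : LTree × PBTree, indecBL p.1 ∧ graftRight p.1 p.2 = c) := by
  constructor
  · rintro b s ⟨⟨hui, hlm⟩, hrt⟩
    refine ⟨⟨graftRight_isUpperIdeal b s hrt hui, graftRight_leftmostMin b s hrt hlm⟩,
      ?_, graftRight_size b s⟩
    cases b with
    | leaf => simp [rightmostTrue] at hrt
    | node l lb r => simp [graftRight]
  · rintro c ⟨hui, hlm⟩ hne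
    obtain ⟨b, s, hg, hcase⟩ := exists_decomp c hui
    rcases hcase with hrt | ⟨_, hall⟩
    · refine ⟨(b, s), ⟨⟨⟨isUpperIdeal_of_graftRight b s (hg ▸ hui),
        leftmostMin_of_graftRight b s (hg ▸ hlm)⟩, hrt⟩, hg⟩, ?_⟩
      rintro ⟨b', s'⟩ ⟨⟨_, hrt'⟩, hg'⟩
      obtain ⟨h1, h2⟩ := graftRight_inj b' b s' s hrt' hrt (hg'.trans hg.symm)
      simp [h1, h2]
    · rw [allFalse_not_leftmostMin c hne hall] at hlm
      exact absurd hlm (by simp)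
end
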